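/- Let d ≥ 1 and 0 ≤ n < m be integers and let N ≥ n + m be an integer. Then for every θ ∈ ℝ^d, Σ_{θ_k ∈ Θ_N^d} |D_{n,m}^d(θ − θ_k)| ≤ N^d · ( (m+n)/(m−n) )^{d/2}. -/

import Mathlib

/-- The uniform sampling grid point in `[0, 2π]^d` indexed by `k ∈ {0,…,N−1}^d`. -/
noncomputable def trigGrid (N : ℕ) {d : ℕ} (k : Fin d → Fin N) : Fin d → ℝ :=
  fun i => 2 * Real.pi * (k i : ℝ) / N

/-- `p : ℝ^d → ℂ` is a `d`-variate trigonometric polynomial of degree at most `n`. -/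
noncomputable def IsTrigPoly (d n : ℕ) (p : (Fin d → ℝ) → ℂ) : Prop :=
  ∃ c : (Fin d → ℤ) → ℂ, ∀ θ : Fin d → ℝ,
    p θ = ∑ k ∈ Fintype.piFinset (fun _ : Fin d => Finset.Icc (-(n : ℤ)) (n : ℤ)),
      c k * Complex.exp (Complex.I * ((∑ i, (k i : ℝ) * θ i : ℝ) : ℂ))

/-- The univariate Dirichlet kernel `D_l(t) = Σ_{k=−l}^{l} exp(i k t)`. -/
noncomputable def dirichletKer (l : ℕ) (t : ℝ) : ℂ :=
  ∑ k ∈ Finset.Icc (-(l : ℤ)) (l : ℤ), Complex.exp (Complex.I * (k : ℂ) * (t : ℂ))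

/-- The univariate de la Vallée-Poussin kernel `D_{n,m}(t) = (1/(m−n)) Σ_{l=n}^{m−1} D_l(t)`. -/
noncomputable def vpKer (n m : ℕ) (t : ℝ) : ℂ :=
  (1 / ((m : ℂ) - (n : ℂ))) * ∑ l ∈ Finset.Ico n m, dirichletKer l t



private lemma grid_geom (N : ℕ) (hN : 0 < N) (a : ℤ) :
    ∑ k : Fin N, Complex.exp (Complex.I * a * (2 * Real.pi * k / N)) =
      if (N : ℤ) ∣ a then (N : ℂ) else 0 := by
  have hN' : (N : ℂ) ≠ 0 := Nat.cast_ne_zero.mpr hN.ne'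
  set z : ℂ := Complex.exp (Complex.I * a * (2 * Real.pi / N)) with hz
  have hterm : ∀ k : Fin N,
      Complex.exp (Complex.I * a * (2 * Real.pi * k / N)) = z ^ (k : ℕ) := by
    intro k
    rw [hz, ← Complex.exp_nat_mul]
    congr 1
    push_cast
    ring
  rw [Finset.sum_congr rfl fun k _ => hterm k]
  rw [Fin.sum_univ_eq_sum_range (fun k => z ^ k) N]
  by_cases hdvd : (N : ℤ) ∣ a
  · obtain ⟨c, rfl⟩ := hdvd
    have hz1 : z = 1 := by
      rw [hz, show Complex.I * ((N : ℤ) * c : ℤ) * (2 * Real.pi / N)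
          = (c : ℂ) * (2 * Real.pi * Complex.I) by push_cast; field_simp]
      exact Complex.exp_int_mul_two_pi_mul_I c
    simp [hz1]
  · have hz1 : z ≠ 1 := by
      intro h
      rw [hz, Complex.exp_eq_one_iff] at h
      obtain ⟨t, ht⟩ := h
      have hπ : (Real.pi : ℂ) ≠ 0 := Complex.ofReal_ne_zero.mpr Real.pi_ne_zero
      have hI : Complex.I ≠ 0 := Complex.I_ne_zero
      have h2 : (a : ℂ) = (t : ℂ) * N := by
        field_simp at ht
        have h2π : (2 * (Real.pi : ℂ) * Complex.I) ≠ 0 := by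
          simp [hπ, hI]
        exact mul_right_cancel₀ h2π (by linear_combination (2 * (Real.pi : ℂ) * Complex.I) * ht)
      have h3 : a = t * N := by exact_mod_cast h2
      exact hdvd ⟨t, by rw [h3]; ring⟩
    rw [geom_sum_eq hz1]
    have hzN : z ^ N = 1 := by
      rw [hz, ← Complex.exp_nat_mul,
        show (N : ℂ) * (Complex.I * a * (2 * Real.pi / N)) = (a : ℂ) * (2 * Real.pi * Complex.I)
          by field_simp]
      exact Complex.exp_int_mul_two_pi_mul_I a
    rw [hzN, if_neg hdvd]
    simp


private lemma gauss_odd (n : ℕ) (a : ℕ) :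
    ∑ l ∈ Finset.Ico n (n + a), (2 * l + 1) = a * (2 * n + a) := by
  induction a with
  | zero => simp
  | succ a ih =>
      rw [← add_assoc, Finset.sum_Ico_succ_top (by omega), ih]
      ring

private lemma exp_I_int (k : ℤ) (t : ℝ) :
    Complex.exp (Complex.I * k * t) = (Complex.exp (Complex.I * t)) ^ k := by
  rw [← Complex.exp_int_mul]; congr 1; ring

private lemma exp_I_nat (k : ℕ) (t : ℝ) :
    Complex.exp (Complex.I * k * t) = (Complex.exp (Complex.I * t)) ^ k := by
  rw [← Complex.exp_nat_mul]; congr 1; ring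

private noncomputable def Kker (c : ℕ) (t : ℝ) : ℂ :=
  ∑ j ∈ Finset.range c, Complex.exp (Complex.I * j * t)

private lemma sum_Icc_pow (E : ℂ) (hE : E ≠ 0) (l : ℕ) :
    ∑ k ∈ Finset.Icc (-(l : ℤ)) (l : ℤ), E ^ k
      = (E ^ l)⁻¹ * ∑ j ∈ Finset.range (2 * l + 1), E ^ j := by
  have h1 : ∑ k ∈ Finset.Icc (-(l : ℤ)) (l : ℤ), E ^ k
      = ∑ j ∈ Finset.range (2 * l + 1), E ^ ((j : ℤ) - l) := by
    refine Finset.sum_nbij' (fun k => (k + l).toNat) (fun j => (j : ℤ) - l) ?_ ?_ ?_ ?_ ?_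
    · intro k hk; simp only [Finset.mem_Icc] at hk; simp only [Finset.mem_range]; omega
    · intro j hj; simp only [Finset.mem_range] at hj; simp only [Finset.mem_Icc]; omega
    · intro k hk; simp only [Finset.mem_Icc] at hk; omega
    · intro j hj; simp only [Finset.mem_range] at hj; omega
    · intro k hk; simp only [Finset.mem_Icc] at hk; congr 1; omega
  rw [h1, Finset.mul_sum]
  refine Finset.sum_congr rfl fun j hj => ?_
  rw [zpow_sub₀ hE, zpow_natCast, zpow_natCast]
  ring

private lemma dirichletKer_eq (l : ℕ) (t : ℝ) :
    dirichletKer l t = ∑ k ∈ Finset.Icc (-(l : ℤ)) (l : ℤ), (Complex.exp (Complex.I * t)) ^ k :=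
  Finset.sum_congr rfl fun k _ => exp_I_int k t

private lemma Kker_eq (c : ℕ) (t : ℝ) :
    Kker c t = ∑ j ∈ Finset.range c, (Complex.exp (Complex.I * t)) ^ j :=
  Finset.sum_congr rfl fun k _ => exp_I_nat k t

private lemma frac_key (E A B : ℂ) (hE0 : E ≠ 0) (hA : A ≠ 0) (hB : B ≠ 0)
    (hEsub : E - 1 ≠ 0) (hEsub' : E⁻¹ - 1 ≠ 0) :
    (E * ((A - B) / (E - 1)) - (A⁻¹ - B⁻¹) / (E⁻¹ - 1)) / (E - 1)
      = (E * A⁻¹) * ((A * B - 1) / (E - 1)) * ((A * B⁻¹ - 1) / (E - 1)) := by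
  have hx : (A⁻¹ - B⁻¹) / (E⁻¹ - 1) = (A - B) * E / (A * B * (E - 1)) := by
    rw [div_eq_div_iff hEsub' (by simp [hA, hB, hEsub])]
    field_simp
    ring
  have hy : A * B⁻¹ - 1 = (A - B) / B := by field_simp
  have hz : E * A⁻¹ = E / A := by rw [div_eq_mul_inv]
  rw [hx, hy, hz, mul_div_assoc', div_sub_div _ _ hEsub (by simp [hA, hB, hEsub]),
    div_div, div_mul_div_comm, div_mul_div_comm, mul_div_assoc', div_div]
  rw [div_eq_div_iff (by simp [hA, hB, hEsub]) (by simp [hA, hB, hEsub])]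
  ring

private lemma dl_sum_factor (n m : ℕ) (hm : n < m) (t : ℝ) :
    ∑ l ∈ Finset.Ico n m, dirichletKer l t =
      ((Complex.exp (Complex.I * t)) ^ ((m : ℤ) - 1))⁻¹ * Kker (m + n) t * Kker (m - n) t := by
  set E : ℂ := Complex.exp (Complex.I * t) with hEdef
  have hE0 : E ≠ 0 := Complex.exp_ne_zero _
  have hzpow : E ^ ((m : ℤ) - 1) = E ^ (m - 1 : ℕ) := by
    rw [show ((m : ℤ) - 1) = ((m - 1 : ℕ) : ℤ) by omega, zpow_natCast]
  by_cases hE1 : E = 1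
  · have hD : ∀ l ∈ Finset.Ico n m, dirichletKer l t = ((2 * l + 1 : ℕ) : ℂ) := by
      intro l _
      rw [dirichletKer_eq]
      simp only [← hEdef, hE1, one_zpow, Finset.sum_const, nsmul_eq_mul, mul_one]
      rw [Int.card_Icc]
      congr 1
      omega
    rw [Finset.sum_congr rfl hD, ← Nat.cast_sum]
    have hIco : Finset.Ico n m = Finset.Ico n (n + (m - n)) := by congr 1; omega
    rw [hIco, gauss_odd]
    have hK : ∀ c : ℕ, Kker c t = (c : ℂ) := by
      intro c
      rw [Kker_eq]
      simp [← hEdef, hE1]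
    rw [hK, hK, hzpow, hE1]
    push_cast [show 2 * n + (m - n) = m + n by omega]
    simp
    ring
  · have hE1' : E⁻¹ ≠ 1 := fun h => hE1 (by rw [← inv_inv E, h, inv_one])
    have hEsub : E - 1 ≠ 0 := sub_ne_zero.mpr hE1
    have hEsub' : E⁻¹ - 1 ≠ 0 := sub_ne_zero.mpr hE1'
    have hA : E ^ m ≠ 0 := pow_ne_zero _ hE0
    have hB : E ^ n ≠ 0 := pow_ne_zero _ hE0
    have hD : ∀ l ∈ Finset.Ico n m,
        dirichletKer l t = (E * E ^ l - (E⁻¹) ^ l) / (E - 1) := by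
      intro l _
      rw [dirichletKer_eq, ← hEdef, sum_Icc_pow E hE0, geom_sum_eq hE1]
      rw [inv_pow]
      field_simp
      ring
    rw [Finset.sum_congr rfl hD]
    rw [← Finset.sum_div, Finset.sum_sub_distrib, ← Finset.mul_sum]
    rw [geom_sum_Ico hE1 hm.le, geom_sum_Ico hE1' hm.le]
    rw [Kker_eq, Kker_eq, ← hEdef, geom_sum_eq hE1, geom_sum_eq hE1, hzpow]
    have h1 : E ^ (m - 1 : ℕ) * E = E ^ m := by
      rw [← pow_succ]; congr 1; omega
    have h2 : E ^ (m - n : ℕ) * E ^ n = E ^ m := by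
      rw [← pow_add]; congr 1; omega
    have h3 : E ^ (m + n) = E ^ m * E ^ n := by rw [pow_add]
    have h4 : (E ^ (m - 1 : ℕ))⁻¹ = E * (E ^ m)⁻¹ := by
      rw [← h1]; rw [mul_inv]; field_simp
    have h5 : E ^ (m - n : ℕ) = E ^ m * (E ^ n)⁻¹ := by
      rw [← h2]; field_simp
    rw [inv_pow, inv_pow, h3, h4, h5]
    exact frac_key E (E ^ m) (E ^ n) hE0 hA hB hEsub hEsub'

private lemma abs_vp (n m : ℕ) (hm : n < m) (t : ℝ) :
    ‖vpKer n m t‖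
      = (1 / ((m : ℝ) - n)) * (‖Kker (m + n) t‖ * ‖Kker (m - n) t‖) := by
  unfold vpKer
  rw [dl_sum_factor n m hm t]
  rw [norm_mul, norm_mul, norm_mul, norm_inv, norm_div, norm_one, norm_zpow]
  have h1 : ‖Complex.exp (Complex.I * t)‖ = 1 := by
    rw [Complex.norm_exp]
    norm_num [Complex.mul_re, Complex.I_re, Complex.I_im]
  have h2 : ‖(m : ℂ) - n‖ = (m : ℝ) - n := by
    rw [show ((m : ℂ) - n) = (((m : ℝ) - n : ℝ) : ℂ) by push_cast; ring, Complex.norm_real, Real.norm_eq_abs,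
      abs_of_nonneg (by have : (n:ℝ) ≤ m := Nat.cast_le.mpr hm.le; linarith)]
  rw [h1, h2, one_zpow, inv_one, one_mul]


private lemma grid_sq (N c : ℕ) (hN : 0 < N) (hc : c ≤ N) (θ : ℝ) :
    ∑ k : Fin N, ‖Kker c (θ - 2 * Real.pi * k / N)‖ ^ 2 = (c : ℝ) * N := by
  have hconj : ∀ t : ℝ, (starRingEnd ℂ) (Kker c t) =
      ∑ j ∈ Finset.range c, Complex.exp (-(Complex.I * j * t)) := by
    intro t
    unfold Kker
    rw [map_sum]
    refine Finset.sum_congr rfl fun j _ => ?_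
    rw [← Complex.exp_conj]
    congr 1
    simp [Complex.conj_I]
  have hprod : ∀ t : ℝ, Kker c t * (starRingEnd ℂ) (Kker c t)
      = ∑ j ∈ Finset.range c, ∑ j' ∈ Finset.range c,
          Complex.exp (Complex.I * (((j : ℤ) : ℂ) - ((j' : ℤ) : ℂ)) * (t : ℂ)) := by
    intro t
    rw [hconj, Kker, Finset.sum_mul_sum]
    refine Finset.sum_congr rfl fun j _ => Finset.sum_congr rfl fun j' _ => ?_
    rw [← Complex.exp_add]
    congr 1
    push_cast
    ring
  have hinner : ∀ j ∈ Finset.range c, ∀ j' ∈ Finset.range c,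
      (∑ k : Fin N,
        Complex.exp (Complex.I * (((j : ℤ) : ℂ) - ((j' : ℤ) : ℂ))
          * ((θ - 2 * Real.pi * k / N : ℝ) : ℂ)))
        = if j = j' then (N : ℂ) else 0 := by
    intro j hj j' hj'
    have hsplit : ∀ k : Fin N,
        Complex.exp (Complex.I * (((j : ℤ) : ℂ) - ((j' : ℤ) : ℂ))
            * ((θ - 2 * Real.pi * k / N : ℝ) : ℂ))
          = Complex.exp (Complex.I * (((j : ℤ) : ℂ) - ((j' : ℤ) : ℂ)) * (θ : ℂ))
            * Complex.exp (Complex.I * (((j' : ℤ) - (j : ℤ) : ℤ) : ℂ)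
                * (2 * (Real.pi : ℂ) * (k : ℕ) / (N : ℕ))) := by
      intro k
      rw [← Complex.exp_add]
      congr 1
      push_cast
      ring
    rw [Finset.sum_congr rfl fun k _ => hsplit k, ← Finset.mul_sum,
      grid_geom N hN ((j' : ℤ) - (j : ℤ))]
    by_cases hjj : j = j'
    · subst hjj
      simp
    · rw [if_neg hjj, if_neg, mul_zero]
      intro hdvd
      simp only [Finset.mem_range] at hj hj'
      have hne : ((j' : ℤ) - (j : ℤ)) ≠ 0 := by omega
      have := Int.le_of_dvd (abs_pos.mpr hne) ((dvd_abs _ _).mpr hdvd)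
      rw [Int.abs_eq_natAbs] at this
      omega
  have hsum : ∑ k : Fin N, Kker c (θ - 2 * Real.pi * k / N)
        * (starRingEnd ℂ) (Kker c (θ - 2 * Real.pi * k / N)) = ((c : ℝ) * N : ℝ) := by
    calc ∑ k : Fin N, Kker c (θ - 2 * Real.pi * k / N)
          * (starRingEnd ℂ) (Kker c (θ - 2 * Real.pi * k / N))
        = ∑ k : Fin N, ∑ j ∈ Finset.range c, ∑ j' ∈ Finset.range c,
            Complex.exp (Complex.I * (((j : ℤ) : ℂ) - ((j' : ℤ) : ℂ))
              * ((θ - 2 * Real.pi * k / N : ℝ) : ℂ)) :=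
          Finset.sum_congr rfl fun k _ => hprod _
      _ = ∑ j ∈ Finset.range c, ∑ j' ∈ Finset.range c, ∑ k : Fin N,
            Complex.exp (Complex.I * (((j : ℤ) : ℂ) - ((j' : ℤ) : ℂ))
              * ((θ - 2 * Real.pi * k / N : ℝ) : ℂ)) := by
          rw [Finset.sum_comm]
          exact Finset.sum_congr rfl fun j _ => Finset.sum_comm
      _ = ∑ j ∈ Finset.range c, ∑ j' ∈ Finset.range c, if j = j' then (N : ℂ) else 0 :=
          Finset.sum_congr rfl fun j hj => Finset.sum_congr rfl fun j' hj' => hinner j hj j' hj'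
      _ = ((c : ℝ) * N : ℝ) := by
          have hrow : ∀ j ∈ Finset.range c,
              (∑ j' ∈ Finset.range c, if j = j' then (N : ℂ) else 0) = (N : ℂ) := by
            intro j hj
            rw [Finset.sum_ite_eq]
            exact if_pos hj
          rw [Finset.sum_congr rfl hrow, Finset.sum_const, Finset.card_range]
          push_cast
          ring
  have hcast : ∀ k ∈ (Finset.univ : Finset (Fin N)), Kker c (θ - 2 * Real.pi * k / N)
      * (starRingEnd ℂ) (Kker c (θ - 2 * Real.pi * k / N))
      = ((‖Kker c (θ - 2 * Real.pi * k / N)‖ ^ 2 : ℝ) : ℂ) := by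
    intro k _
    rw [Complex.mul_conj, Complex.sq_norm]
  rw [Finset.sum_congr rfl hcast, ← Complex.ofReal_sum] at hsum
  exact_mod_cast hsum


private lemma univ_bound (n m N : ℕ) (hm : n < m) (hN : n + m ≤ N) (x : ℝ) :
    ∑ k : Fin N, ‖vpKer n m (x - 2 * Real.pi * k / N)‖ ≤
      (N : ℝ) * Real.sqrt (((m : ℝ) + n) / ((m : ℝ) - n)) := by
  have hNpos : 0 < N := by omega
  have hmn : (0 : ℝ) < (m : ℝ) - n := by
    have : (n : ℝ) < m := Nat.cast_lt.mpr hm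
    linarith
  set F : Fin N → ℝ := fun k => ‖Kker (m + n) (x - 2 * Real.pi * k / N)‖ with hF
  set G : Fin N → ℝ := fun k => ‖Kker (m - n) (x - 2 * Real.pi * k / N)‖ with hG
  have hFG : ∑ k : Fin N, ‖vpKer n m (x - 2 * Real.pi * k / N)‖
      = (1 / ((m : ℝ) - n)) * ∑ k : Fin N, F k * G k := by
    rw [Finset.mul_sum]
    exact Finset.sum_congr rfl fun k _ => abs_vp n m hm _
  have hCS : (∑ k : Fin N, F k * G k) ^ 2
      ≤ (∑ k : Fin N, F k ^ 2) * (∑ k : Fin N, G k ^ 2) :=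
    Finset.sum_mul_sq_le_sq_mul_sq _ _ _
  have hFsq : ∑ k : Fin N, F k ^ 2 = ((m : ℝ) + n) * N := by
    rw [show ((m : ℝ) + n) = ((m + n : ℕ) : ℝ) by push_cast; ring]
    exact grid_sq N (m + n) hNpos (by omega) x
  have hGsq : ∑ k : Fin N, G k ^ 2 = ((m : ℝ) - n) * N := by
    rw [show ((m : ℝ) - n) = ((m - n : ℕ) : ℝ) by push_cast [hm.le]; ring]
    exact grid_sq N (m - n) hNpos (by omega) x
  have hsum_nonneg : 0 ≤ ∑ k : Fin N, F k * G k :=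
    Finset.sum_nonneg fun k _ => mul_nonneg (norm_nonneg _) (norm_nonneg _)
  have hb : ∑ k : Fin N, F k * G k
      ≤ Real.sqrt ((((m : ℝ) + n) * N) * (((m : ℝ) - n) * N)) := by
    rw [← Real.sqrt_sq hsum_nonneg]
    apply Real.sqrt_le_sqrt
    rw [← hFsq, ← hGsq]
    exact hCS
  have hkey : Real.sqrt ((((m : ℝ) + n) * N) * (((m : ℝ) - n) * N))
      = (N : ℝ) * ((m : ℝ) - n) * Real.sqrt (((m : ℝ) + n) / ((m : ℝ) - n)) := by
    rw [show (((m : ℝ) + n) * N) * (((m : ℝ) - n) * N)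
        = ((N : ℝ) * ((m : ℝ) - n)) ^ 2 * (((m : ℝ) + n) / ((m : ℝ) - n)) by
      field_simp]
    rw [Real.sqrt_mul (sq_nonneg _), Real.sqrt_sq (by positivity)]
  rw [hFG]
  rw [hkey] at hb
  calc (1 / ((m : ℝ) - n)) * ∑ k : Fin N, F k * G k
      ≤ (1 / ((m : ℝ) - n)) * ((N : ℝ) * ((m : ℝ) - n)
          * Real.sqrt (((m : ℝ) + n) / ((m : ℝ) - n))) := by
        apply mul_le_mul_of_nonneg_left hb
        positivity
    _ = (N : ℝ) * Real.sqrt (((m : ℝ) + n) / ((m : ℝ) - n)) := by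
        field_simp

theorem stmt7 (d n m N : ℕ) (hd : 1 ≤ d) (hm : n < m) (hN : n + m ≤ N) :
    ∀ θ : Fin d → ℝ,
      ∑ k : Fin d → Fin N, ‖∏ i, vpKer n m (θ i - trigGrid N k i)‖ ≤
        (N : ℝ) ^ d * (((m : ℝ) + n) / ((m : ℝ) - n)) ^ ((d : ℝ) / 2) := by
  intro θ
  have hmn : (0 : ℝ) < (m : ℝ) - n := by
    have : (n : ℝ) < m := Nat.cast_lt.mpr hm
    linarith
  have hr : (0 : ℝ) ≤ ((m : ℝ) + n) / ((m : ℝ) - n) := by positivity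
  have hprod : ∀ k : Fin d → Fin N,
      ‖∏ i, vpKer n m (θ i - trigGrid N k i)‖
        = ∏ i, ‖vpKer n m (θ i - trigGrid N k i)‖ := fun k => norm_prod _ _
  rw [Finset.sum_congr rfl fun k _ => hprod k]
  have hfact : ∑ k : Fin d → Fin N, ∏ i, ‖vpKer n m (θ i - trigGrid N k i)‖
      = ∏ i, ∑ j : Fin N, ‖vpKer n m (θ i - 2 * Real.pi * j / N)‖ := by
    rw [Finset.prod_univ_sum]
    rw [Fintype.piFinset_univ]
    exact Finset.sum_congr rfl fun k _ => Finset.prod_congr rfl fun i _ => by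
      simp only [trigGrid]
  rw [hfact]
  have hbound : ∏ i : Fin d, ∑ j : Fin N, ‖vpKer n m (θ i - 2 * Real.pi * j / N)‖
      ≤ ∏ i : Fin d, ((N : ℝ) * Real.sqrt (((m : ℝ) + n) / ((m : ℝ) - n))) := by
    apply Finset.prod_le_prod
    · intro i _
      exact Finset.sum_nonneg fun j _ => norm_nonneg _
    · intro i _
      exact univ_bound n m N hm hN (θ i)
  refine hbound.trans ?_
  rw [Finset.prod_const, Finset.card_univ, Fintype.card_fin, mul_pow]
  apply mul_le_mul_of_nonneg_left _ (by positivity)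
  rw [Real.sqrt_eq_rpow, ← Real.rpow_natCast (_ ^ (1/2 : ℝ)) d, ← Real.rpow_mul hr]
  apply le_of_eq
  congr 1
  ring
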